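/- (p = 1: cells are starlike.) Let (M,d) be a geodesic metric space (e.g. a compact connected complete Riemannian manifold), x₁,…,x_k ∈ M, b₁,…,b_k ∈ ℝ, Φ_i(z) = −d(x_i,z) + b_i, and C_i = {z : Φ_i(z) > Φ_j(z) ∀ j ≠ i}. Assume C_i ≠ ∅ (so b_i ≥ −d(x_i,x_j) + b_j for all j). Then for every w ∈ C_i and every q ∈ M with d(x_i,w) = d(x_i,q) + d(q,w) (q on a minimizing geodesic from x_i to w), we have q ∈ C_i. In particular C_i is starlike with respect to x_i and hence path-connected. -/
import Mathlib


/-- `p = 1`: cells are starlike.  In a geodesic metric space `M` (any two points are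
joined by a minimizing geodesic), with `Φ_i(z) = −d(x_i,z) + b_i` and cells
`C_i = {z | Φ_i(z) > Φ_j(z) ∀ j ≠ i}`:  any metric-between point `q` of `x_i` and a
cell point `w ∈ C_i` again lies in `C_i` (starlikeness with respect to `x_i`), and a
nonempty cell is path-connected. -/
theorem stmt11 (M : Type*) [MetricSpace M]
    (hgeo : ∀ a b : M, ∃ f : ℝ → M, f 0 = a ∧ f (dist a b) = b ∧
      ∀ s ∈ Set.Icc (0 : ℝ) (dist a b), ∀ t ∈ Set.Icc (0 : ℝ) (dist a b),
        dist (f s) (f t) = |s - t|)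
    (k : ℕ) (x : Fin k → M) (b : Fin k → ℝ) (i : Fin k) :
    (∀ w ∈ {z : M | ∀ j, j ≠ i → -dist (x j) z + b j < -dist (x i) z + b i},
      ∀ q : M, dist (x i) w = dist (x i) q + dist q w →
        q ∈ {z : M | ∀ j, j ≠ i → -dist (x j) z + b j < -dist (x i) z + b i}) ∧
    ({z : M | ∀ j, j ≠ i → -dist (x j) z + b j < -dist (x i) z + b i}.Nonempty →
      IsPathConnected
        {z : M | ∀ j, j ≠ i → -dist (x j) z + b j < -dist (x i) z + b i}) := by
  set C := {z : M | ∀ j, j ≠ i → -dist (x j) z + b j < -dist (x i) z + b i} with hC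
  have key : ∀ w ∈ C, ∀ q : M, dist (x i) w = dist (x i) q + dist q w → q ∈ C := by
    intro w hw q hq j hj
    have h1 := hw j hj
    have h2 : dist (x j) w ≤ dist (x j) q + dist q w := dist_triangle _ _ _
    linarith
  refine ⟨key, ?_⟩
  rintro ⟨w, hw⟩
  have hxi : x i ∈ C := key w hw (x i) (by simp)
  refine ⟨x i, hxi, ?_⟩
  intro z hz
  obtain ⟨f, h0, hd, hiso⟩ := hgeo (x i) z
  set d := dist (x i) z with hdd
  have hd0 : (0 : ℝ) ≤ d := dist_nonneg
  have hmem : ∀ t : ℝ, 0 ≤ t → t ≤ 1 → t * d ∈ Set.Icc (0 : ℝ) d := by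
    intro t ht0 ht1
    exact ⟨mul_nonneg ht0 hd0, by nlinarith⟩
  have hdist0 : ∀ u ∈ Set.Icc (0 : ℝ) d, dist (x i) (f u) = u := by
    intro u hu
    have := hiso 0 ⟨le_refl 0, hd0⟩ u hu
    rw [h0] at this
    rw [this, abs_of_nonpos (by linarith [hu.1])]
    ring
  have hdistd : ∀ u ∈ Set.Icc (0 : ℝ) d, dist (f u) z = d - u := by
    intro u hu
    have := hiso u hu d ⟨hd0, le_refl d⟩
    rw [hd] at this
    rw [this, abs_of_nonpos (by linarith [hu.2])]
    ring
  have hCmem : ∀ t : unitInterval, f ((t : ℝ) * d) ∈ C := by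
    intro t
    have ht := hmem t t.2.1 t.2.2
    apply key z hz
    rw [hdist0 _ ht, hdistd _ ht]
    ring
  have hlip : LipschitzWith d.toNNReal (fun t : unitInterval => f ((t : ℝ) * d)) := by
    apply LipschitzWith.of_dist_le_mul
    intro s t
    have hs := hmem s s.2.1 s.2.2
    have ht := hmem t t.2.1 t.2.2
    rw [hiso _ hs _ ht]
    have : (s : ℝ) * d - (t : ℝ) * d = ((s : ℝ) - t) * d := by ring
    rw [this, abs_mul, abs_of_nonneg hd0]
    have : dist s t = |(s : ℝ) - t| := rfl
    rw [this, Real.coe_toNNReal d hd0]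
    ring_nf
    exact le_refl _
  refine ⟨⟨⟨fun t => f ((t : ℝ) * d), hlip.continuous⟩, ?_, ?_⟩, fun t => hCmem t⟩
  · simp [h0]
  · simp [hd]
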